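/- arXiv:0906.4424 — 4 statements merged into one kernel-verified Lean document; each statement's English description precedes it below -/
import Mathlib

section
/- Let G be a finite group and H₁, H₂ subgroups of G. Then H₁ and H₂ are Gassmann equivalent in G if and only if the permutation representations of G on the coset spaces are isomorphic over ℚ, i.e. if and only if ℚ[G/H₁] and ℚ[G/H₂] are isomorphic as ℚ-linear representations of G (isomorphic objects of Rep ℚ G, where ℚ[G/X] is the representation Rep.ofMulAction ℚ G (G ⧸ X)). -/
set_option linter.unusedSectionVars false
set_option maxHeartbeats 1000000

open Module LinearMap Representation MonoidAlgebra


section Core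
variable {G : Type} [Group G]

variable {M N T : Type} [AddCommGroup M] [Module ℚ M] [Module (MonoidAlgebra ℚ G) M]
  [IsScalarTower ℚ (MonoidAlgebra ℚ G) M]
  [AddCommGroup N] [Module ℚ N] [Module (MonoidAlgebra ℚ G) N]
  [IsScalarTower ℚ (MonoidAlgebra ℚ G) N]
  [AddCommGroup T] [Module ℚ T] [Module (MonoidAlgebra ℚ G) T]
  [IsScalarTower ℚ (MonoidAlgebra ℚ G) T]

theorem fd_submodule [FiniteDimensional ℚ M] (p : Submodule (MonoidAlgebra ℚ G) M) :
    FiniteDimensional ℚ p :=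
  FiniteDimensional.of_injective ((p.subtype).restrictScalars ℚ) p.injective_subtype

theorem fd_hom [FiniteDimensional ℚ M] [FiniteDimensional ℚ T] :
    FiniteDimensional ℚ (T →ₗ[MonoidAlgebra ℚ G] M) :=
  FiniteDimensional.of_injective (f := LinearMap.restrictScalarsₗ ℚ (MonoidAlgebra ℚ G) T M ℚ)
    (LinearMap.restrictScalars_injective ℚ)

/-- Post-composition with an `A`-linear equiv, as a `ℚ`-linear equiv of hom spaces. -/
noncomputable def homCongrRight (e : M ≃ₗ[MonoidAlgebra ℚ G] N) :
    (T →ₗ[MonoidAlgebra ℚ G] M) ≃ₗ[ℚ] (T →ₗ[MonoidAlgebra ℚ G] N) where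
  toFun f := e.toLinearMap ∘ₗ f
  invFun f := e.symm.toLinearMap ∘ₗ f
  map_add' f g := by ext x; simp
  map_smul' c f := by
    ext x
    simp only [LinearMap.comp_apply, LinearMap.smul_apply, RingHom.id_apply,
      LinearEquiv.coe_coe]
    exact map_smul (e.restrictScalars ℚ) c (f x)
  left_inv f := by ext x; simp
  right_inv f := by ext x; simp

theorem finrank_hom_congr (e : M ≃ₗ[MonoidAlgebra ℚ G] N) :
    finrank ℚ (T →ₗ[MonoidAlgebra ℚ G] M) = finrank ℚ (T →ₗ[MonoidAlgebra ℚ G] N) :=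
  LinearEquiv.finrank_eq (homCongrRight e)

theorem finrank_hom_prod [FiniteDimensional ℚ M] [FiniteDimensional ℚ N]
    [FiniteDimensional ℚ T] :
    finrank ℚ (T →ₗ[MonoidAlgebra ℚ G] (M × N))
      = finrank ℚ (T →ₗ[MonoidAlgebra ℚ G] M) + finrank ℚ (T →ₗ[MonoidAlgebra ℚ G] N) := by
  haveI := fd_hom (G := G) (M := M) (T := T)
  haveI := fd_hom (G := G) (M := N) (T := T)
  rw [← finrank_prod (R := ℚ)]
  exact (LinearEquiv.finrank_eq (LinearMap.prodEquiv (R := MonoidAlgebra ℚ G) (S := ℚ)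
    (M := T) (M₂ := M) (M₃ := N))).symm

theorem core_aux [Finite G] : ∀ (n : ℕ) (M N : Type) [AddCommGroup M] [Module ℚ M]
    [Module (MonoidAlgebra ℚ G) M]
    [IsScalarTower ℚ (MonoidAlgebra ℚ G) M] [FiniteDimensional ℚ M] [AddCommGroup N] [Module ℚ N]
    [Module (MonoidAlgebra ℚ G) N]
    [IsScalarTower ℚ (MonoidAlgebra ℚ G) N] [FiniteDimensional ℚ N],
    finrank ℚ M = n →
    (∀ (T : Type) [AddCommGroup T] [Module ℚ T] [Module (MonoidAlgebra ℚ G) T]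
      [IsScalarTower ℚ (MonoidAlgebra ℚ G) T] [FiniteDimensional ℚ T],
      finrank ℚ (T →ₗ[MonoidAlgebra ℚ G] M) = finrank ℚ (T →ₗ[MonoidAlgebra ℚ G] N)) →
    Nonempty (M ≃ₗ[MonoidAlgebra ℚ G] N) := by
  have := Fintype.ofFinite G
  haveI : NeZero ((Fintype.card G : ℚ)) := ⟨by exact_mod_cast Fintype.card_ne_zero⟩
  intro n
  induction n using Nat.strong_induction_on with
  | _ n ih =>
    intro M N _ _ _ _ _ _ _ _ _ _ hn H
    rcases subsingleton_or_nontrivial M with hM | hM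
    · -- M trivial; show N trivial
      haveI : Subsingleton (N →ₗ[MonoidAlgebra ℚ G] M) :=
        ⟨fun f g => by ext x; exact Subsingleton.elim _ _⟩
      haveI := fd_hom (G := G) (M := N) (T := N)
      have h0 : finrank ℚ (N →ₗ[MonoidAlgebra ℚ G] N) = 0 := by
        rw [← H N]
        exact finrank_zero_of_subsingleton
      haveI : Subsingleton (N →ₗ[MonoidAlgebra ℚ G] N) := Module.finrank_zero_iff.mp h0
      haveI : Subsingleton N := by
        constructor
        intro a b
        have h : (LinearMap.id : N →ₗ[MonoidAlgebra ℚ G] N) = 0 := Subsingleton.elim _ _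
        have ha : a = (0 : N →ₗ[MonoidAlgebra ℚ G] N) a := by rw [← h]; rfl
        have hb : b = (0 : N →ₗ[MonoidAlgebra ℚ G] N) b := by rw [← h]; rfl
        simp only [LinearMap.zero_apply] at ha hb
        rw [ha, hb]
      exact ⟨{ toFun := fun _ => 0, invFun := fun _ => 0,
               map_add' := by intros; simp, map_smul' := by intros; simp,
               left_inv := fun x => Subsingleton.elim _ _,
               right_inv := fun x => Subsingleton.elim _ _ }⟩
    · -- M nontrivial: pick a simple submodule S and a complement M'
      obtain ⟨S, hS⟩ := IsSemisimpleModule.exists_simple_submodule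
        (R := MonoidAlgebra ℚ G) (M := M)
      haveI := hS
      haveI := fd_submodule (G := G) (M := M) S
      haveI : Nontrivial S := IsSimpleModule.nontrivial (MonoidAlgebra ℚ G) S
      obtain ⟨M', hM'⟩ := exists_isCompl S
      haveI := fd_submodule (G := G) (M := M) M'
      -- a nonzero map S →ₗ[A] N
      haveI := fd_hom (G := G) (M := M) (T := S)
      haveI := fd_hom (G := G) (M := N) (T := S)
      have hpos : 0 < finrank ℚ (S →ₗ[MonoidAlgebra ℚ G] N) := by
        rw [← H S]
        have : Nontrivial (S →ₗ[MonoidAlgebra ℚ G] M) := by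
          refine nontrivial_of_ne S.subtype 0 ?_
          intro h
          obtain ⟨s, hs⟩ := exists_ne (0 : S)
          apply hs
          have : S.subtype s = 0 := by rw [h]; rfl
          simpa using this
        exact finrank_pos
      haveI : Nontrivial (S →ₗ[MonoidAlgebra ℚ G] N) := finrank_pos_iff.mp hpos
      obtain ⟨f, hf⟩ := exists_ne (0 : S →ₗ[MonoidAlgebra ℚ G] N)
      have hinj : Function.Injective f := injective_of_ne_zero hf
      set S' : Submodule (MonoidAlgebra ℚ G) N := LinearMap.range f with hS'def
      have eS : S ≃ₗ[MonoidAlgebra ℚ G] S' := LinearEquiv.ofInjective f hinj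
      obtain ⟨N', hN'⟩ := exists_isCompl S'
      haveI := fd_submodule (G := G) (M := N) S'
      haveI := fd_submodule (G := G) (M := N) N'
      have eM : (S × M') ≃ₗ[MonoidAlgebra ℚ G] M := Submodule.prodEquivOfIsCompl S M' hM'
      have eN : (S' × N') ≃ₗ[MonoidAlgebra ℚ G] N := Submodule.prodEquivOfIsCompl S' N' hN'
      -- finrank arithmetic
      have hrank : finrank ℚ S + finrank ℚ M' = finrank ℚ M := by
        have := (eM.restrictScalars ℚ).finrank_eq
        simpa [finrank_prod] using this
      have hSpos : 0 < finrank ℚ S := finrank_pos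
      -- descent of the hom-dimension hypothesis
      have H' : ∀ (T : Type) [AddCommGroup T] [Module ℚ T] [Module (MonoidAlgebra ℚ G) T]
          [IsScalarTower ℚ (MonoidAlgebra ℚ G) T] [FiniteDimensional ℚ T],
          finrank ℚ (T →ₗ[MonoidAlgebra ℚ G] M') = finrank ℚ (T →ₗ[MonoidAlgebra ℚ G] N') := by
        intro T _ _ _ _ _
        haveI := fd_hom (G := G) (M := M) (T := T)
        haveI := fd_hom (G := G) (M := N) (T := T)
        haveI := fd_hom (G := G) (M := S) (T := T)
        haveI := fd_hom (G := G) (M := S') (T := T)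
        haveI := fd_hom (G := G) (M := M') (T := T)
        haveI := fd_hom (G := G) (M := N') (T := T)
        have h1 : finrank ℚ (T →ₗ[MonoidAlgebra ℚ G] M)
            = finrank ℚ (T →ₗ[MonoidAlgebra ℚ G] S) + finrank ℚ (T →ₗ[MonoidAlgebra ℚ G] M') :=
          (finrank_hom_congr (T := T) eM.symm).trans (finrank_hom_prod (G := G))
        have h2 : finrank ℚ (T →ₗ[MonoidAlgebra ℚ G] N)
            = finrank ℚ (T →ₗ[MonoidAlgebra ℚ G] S') + finrank ℚ (T →ₗ[MonoidAlgebra ℚ G] N') :=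
          (finrank_hom_congr (T := T) eN.symm).trans (finrank_hom_prod (G := G))
        have h3 : finrank ℚ (T →ₗ[MonoidAlgebra ℚ G] S)
            = finrank ℚ (T →ₗ[MonoidAlgebra ℚ G] S') := finrank_hom_congr (T := T) eS
        have := H T
        omega
      obtain ⟨e'⟩ := ih (finrank ℚ M') (by omega) M' N' rfl H'
      exact ⟨eM.symm.trans ((LinearEquiv.prodCongr eS e').trans eN)⟩


section Bridge
variable {G : Type} [Group G]
variable {T : Type} [AddCommGroup T] [Module ℚ T] [Module (MonoidAlgebra ℚ G) T]
  [IsScalarTower ℚ (MonoidAlgebra ℚ G) T]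
variable {M : Type} [AddCommGroup M] [Module ℚ M] [Module (MonoidAlgebra ℚ G) M]
  [IsScalarTower ℚ (MonoidAlgebra ℚ G) M]

variable (T) in
/-- The representation of `G` on a `MonoidAlgebra ℚ G`-module. -/
noncomputable def reprOfSmul : Representation ℚ G T where
  toFun g :=
    { toFun := fun x => (MonoidAlgebra.of ℚ G g) • x
      map_add' := fun x y => smul_add _ x y
      map_smul' := fun c x => smul_comm _ c x }
  map_one' := by
    ext x
    show MonoidAlgebra.single (1 : G) (1 : ℚ) • x = x
    rw [← MonoidAlgebra.one_def, one_smul]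
  map_mul' g h := by
    ext x
    show MonoidAlgebra.single (g * h) (1 : ℚ) • x = _
    have : MonoidAlgebra.single (g * h) (1 : ℚ)
        = MonoidAlgebra.single g (1 : ℚ) * MonoidAlgebra.single h (1 : ℚ) := by
      rw [MonoidAlgebra.single_mul_single, one_mul]
    rw [this, mul_smul]
    rfl

theorem reprOfSmul_apply (g : G) (x : T) : reprOfSmul T g x = (MonoidAlgebra.of ℚ G g) • x := rfl

/-- Invariants of the internal hom between modules over the monoid algebra are the
module homomorphisms. -/
noncomputable def invariantsEquivHom :
    ((Representation.linHom (reprOfSmul (G := G) T) (reprOfSmul (G := G) M)).invariants)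
      ≃ₗ[ℚ] (T →ₗ[MonoidAlgebra ℚ G] M) where
  toFun f :=
    { toFun := f.1
      map_add' := f.1.map_add
      map_smul' := by
        have key : ∀ (g : G) (x : T), f.1 ((MonoidAlgebra.of ℚ G g) • x)
            = (MonoidAlgebra.of ℚ G g) • f.1 x := by
          intro g x
          have h := f.2 g
          have h' := congrArg (fun (φ : T →ₗ[ℚ] M) => φ (reprOfSmul T g x)) h
          simp only [Representation.linHom_apply, LinearMap.comp_apply, reprOfSmul_apply,
            ← mul_smul, ← map_mul, inv_mul_cancel, map_one, one_smul] at h'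
          exact h'.symm
        intro a x
        simp only [RingHom.id_apply]
        induction a using MonoidAlgebra.induction_on with
        | of g => exact key g x
        | add a b ha hb => rw [add_smul, add_smul, map_add, ha, hb]
        | smul c a ha => rw [smul_assoc, map_smul, ha, smul_assoc]
    }
  map_add' f g := rfl
  map_smul' c f := rfl
  invFun φ :=
    ⟨φ.restrictScalars ℚ, by
      intro g
      ext x
      simp only [Representation.linHom_apply, LinearMap.comp_apply,
        LinearMap.coe_restrictScalars, reprOfSmul_apply, map_smul, ← mul_smul, ← map_mul,
        mul_inv_cancel, map_one, one_smul]⟩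
  left_inv f := by ext x; rfl
  right_inv φ := by ext x; rfl


theorem FDRep_of_character {W : Type} [AddCommGroup W] [Module ℚ W] [FiniteDimensional ℚ W]
    (ρ : Representation ℚ G W) (g : G) :
    (FDRep.of ρ).character g = LinearMap.trace ℚ W (ρ g) := rfl

theorem finrank_hom_char [Fintype G] [Invertible (Fintype.card G : ℚ)]
    [FiniteDimensional ℚ T] [FiniteDimensional ℚ M] :
    (finrank ℚ (T →ₗ[MonoidAlgebra ℚ G] M) : ℚ)
      = ⅟(Fintype.card G : ℚ) • ∑ g : G,
          LinearMap.trace ℚ T (reprOfSmul T g⁻¹) * LinearMap.trace ℚ M (reprOfSmul M g) := by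
  rw [← (invariantsEquivHom (G := G) (T := T) (M := M)).finrank_eq]
  have h := FDRep.average_char_eq_finrank_invariants
    (FDRep.of (Representation.linHom (reprOfSmul (G := G) T) (reprOfSmul (G := G) M)))
  have h' : ⅟(Fintype.card G : ℚ) • ∑ g : G,
      (FDRep.of (Representation.linHom (reprOfSmul (G := G) T)
        (reprOfSmul (G := G) M))).character g
      = ((finrank ℚ ((Representation.linHom (reprOfSmul (G := G) T)
          (reprOfSmul (G := G) M)).invariants) : ℚ)) := by
    rw [invOf_eq_inv, smul_eq_mul, Fintype.card_eq_nat_card]; exact h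
  rw [← h']
  congr 1
  apply Finset.sum_congr rfl
  intro g _
  have h2 := FDRep.char_linHom (FDRep.of (reprOfSmul (G := G) T))
    (FDRep.of (reprOfSmul (G := G) M)) g
  have h2' : (FDRep.of ((reprOfSmul (G := G) T).linHom (reprOfSmul (G := G) M))).character g
      = (FDRep.of (reprOfSmul (G := G) T)).character g⁻¹
        * (FDRep.of (reprOfSmul (G := G) M)).character g := h2
  rw [h2', FDRep_of_character, FDRep_of_character]

theorem finrank_hom_eq_of_trace_eq {N : Type} [AddCommGroup N] [Module ℚ N]
    [Module (MonoidAlgebra ℚ G) N] [IsScalarTower ℚ (MonoidAlgebra ℚ G) N]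
    [Finite G] [FiniteDimensional ℚ M] [FiniteDimensional ℚ N] [FiniteDimensional ℚ T]
    (h : ∀ g : G, LinearMap.trace ℚ M (reprOfSmul M g) = LinearMap.trace ℚ N (reprOfSmul N g)) :
    finrank ℚ (T →ₗ[MonoidAlgebra ℚ G] M) = finrank ℚ (T →ₗ[MonoidAlgebra ℚ G] N) := by
  have := Fintype.ofFinite G
  haveI : Invertible (Fintype.card G : ℚ) :=
    invertibleOfNonzero (by exact_mod_cast Fintype.card_ne_zero)
  have e1 := finrank_hom_char (G := G) (T := T) (M := M)
  have e2 := finrank_hom_char (G := G) (T := T) (M := N)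
  have : (finrank ℚ (T →ₗ[MonoidAlgebra ℚ G] M) : ℚ)
      = (finrank ℚ (T →ₗ[MonoidAlgebra ℚ G] N) : ℚ) := by
    rw [e1, e2]
    congr 1
    apply Finset.sum_congr rfl
    intro g _
    rw [h g]
  exact_mod_cast this


section Counting
variable {G : Type} [Group G]

theorem fixed_iff (H : Subgroup G) (g x : G) :
    g • (QuotientGroup.mk x : G ⧸ H) = QuotientGroup.mk x ↔ x⁻¹ * g * x ∈ H := by
  rw [MulAction.Quotient.smul_mk, smul_eq_mul, QuotientGroup.eq,
    show (g * x)⁻¹ * x = (x⁻¹ * g * x)⁻¹ by group, H.inv_mem_iff]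

/-- The count of `x` with `x⁻¹ g x ∈ H` equals (#fixed points of `g` on `G/H`) ⬝ #H. -/
noncomputable def conjSetEquivFixProdH (H : Subgroup G) (g : G) :
    {x : G // x⁻¹ * g * x ∈ H} ≃ ({q : G ⧸ H // g • q = q}) × H := by
  classical
  set X := {x : G // x⁻¹ * g * x ∈ H}
  let proj : X → {q : G ⧸ H // g • q = q} := fun x =>
    ⟨QuotientGroup.mk x.1, (fixed_iff H g x.1).mpr x.2⟩
  refine (Equiv.sigmaFiberEquiv proj).symm.trans
    ((Equiv.sigmaCongrRight (fun q => ?_)).trans (Equiv.sigmaEquivProd _ _))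
  -- fiber over q is equivalent to H
  have hq : ∀ x : X, proj x = q ↔ (QuotientGroup.mk x.1 : G ⧸ H) = q.1 := by
    intro x
    constructor
    · intro h; exact congrArg Subtype.val h
    · intro h; exact Subtype.ext h
  refine
    { toFun := fun x => ⟨(Quotient.out q.1)⁻¹ * x.1.1, ?_⟩
      invFun := fun h => ⟨⟨Quotient.out q.1 * h.1, ?_⟩, ?_⟩
      left_inv := ?_
      right_inv := ?_ }
  · -- membership in H
    have h1 : (QuotientGroup.mk (Quotient.out q.1) : G ⧸ H) = QuotientGroup.mk x.1.1 := by
      rw [QuotientGroup.out_eq']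
      exact ((hq x.1).mp x.2).symm
    exact QuotientGroup.eq.mp h1
  · -- q.out * h is in X
    have h2 : (QuotientGroup.mk (Quotient.out q.1 * h.1) : G ⧸ H) = q.1 := by
      rw [QuotientGroup.mk_mul_of_mem _ h.2, QuotientGroup.out_eq']
    refine (fixed_iff H g _).mp ?_
    rw [h2]
    exact q.2
  · -- in the fiber
    refine Subtype.ext ?_
    show (QuotientGroup.mk (Quotient.out q.1 * h.1) : G ⧸ H) = q.1
    rw [QuotientGroup.mk_mul_of_mem _ h.2, QuotientGroup.out_eq']
  · intro x
    refine Subtype.ext (Subtype.ext ?_)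
    show Quotient.out q.1 * ((Quotient.out q.1)⁻¹ * x.1.1) = x.1.1
    group
  · intro h
    refine Subtype.ext ?_
    show (Quotient.out q.1)⁻¹ * (Quotient.out q.1 * h.1) = h.1
    group

theorem card_conjset_fix (H : Subgroup G) (g : G) :
    Nat.card {x : G // x⁻¹ * g * x ∈ H}
      = Nat.card {q : G ⧸ H // g • q = q} * Nat.card H := by
  rw [Nat.card_congr (conjSetEquivFixProdH H g), Nat.card_prod]

/-- Fibers of `x ↦ x⁻¹ g x` are in bijection with the "centralizer" subtype. -/
noncomputable def conjSetEquivConjProdCentralizer (H : Subgroup G) (g : G) :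
    {x : G // x⁻¹ * g * x ∈ H}
      ≃ ({h : G // h ∈ H ∧ IsConj g h}) × {z : G // g * z = z * g} := by
  classical
  set X := {x : G // x⁻¹ * g * x ∈ H}
  set CH := {h : G // h ∈ H ∧ IsConj g h}
  let proj : X → CH := fun x =>
    ⟨x.1⁻¹ * g * x.1, x.2, isConj_iff.mpr ⟨x.1⁻¹, by group⟩⟩
  -- choose a base point in each fiber
  have hu : ∀ c : CH, ∃ u : G, u⁻¹ * g * u = c.1 := by
    intro c
    obtain ⟨w, hw⟩ := isConj_iff.mp c.2.2
    exact ⟨w⁻¹, by rw [← hw]; group⟩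
  choose u hu using hu
  refine (Equiv.sigmaFiberEquiv proj).symm.trans
    ((Equiv.sigmaCongrRight (fun c => ?_)).trans (Equiv.sigmaEquivProd _ _))
  have hfib : ∀ x : X, proj x = c ↔ x.1⁻¹ * g * x.1 = c.1 := by
    intro x
    constructor
    · intro h; exact congrArg Subtype.val h
    · intro h; exact Subtype.ext h
  refine
    { toFun := fun x => ⟨x.1.1 * (u c)⁻¹, ?_⟩
      invFun := fun z => ⟨⟨z.1 * u c, ?_⟩, ?_⟩
      left_inv := ?_
      right_inv := ?_ }
  · -- centralizer membership
    have h1 : x.1.1⁻¹ * g * x.1.1 = (u c)⁻¹ * g * (u c) := by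
      rw [(hfib x.1).mp x.2, hu c]
    have h2 : g * (x.1.1 * (u c)⁻¹) = x.1.1 * (x.1.1⁻¹ * g * x.1.1) * (u c)⁻¹ := by group
    rw [h1] at h2
    rw [h2]
    group
  · -- membership in X
    have hz : g * z.1 = z.1 * g := z.2
    have h3 : (z.1 * u c)⁻¹ * g * (z.1 * u c) = (u c)⁻¹ * (z.1⁻¹ * g * z.1) * u c := by group
    have h4 : z.1⁻¹ * g * z.1 = g := by rw [mul_assoc, hz, ← mul_assoc]; group
    show (z.1 * u c)⁻¹ * g * (z.1 * u c) ∈ H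
    rw [h3, h4, hu c]
    exact c.2.1
  · -- in the fiber
    have hz : g * z.1 = z.1 * g := z.2
    have h3 : (z.1 * u c)⁻¹ * g * (z.1 * u c) = (u c)⁻¹ * (z.1⁻¹ * g * z.1) * u c := by group
    have h4 : z.1⁻¹ * g * z.1 = g := by rw [mul_assoc, hz, ← mul_assoc]; group
    refine Subtype.ext ?_
    show (z.1 * u c)⁻¹ * g * (z.1 * u c) = c.1
    rw [h3, h4, hu c]
  · intro x
    refine Subtype.ext (Subtype.ext ?_)
    show x.1.1 * (u c)⁻¹ * u c = x.1.1
    group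
  · intro z
    refine Subtype.ext ?_
    show z.1 * u c * (u c)⁻¹ = z.1
    group

theorem card_conjset_conj (H : Subgroup G) (g : G) :
    Nat.card {x : G // x⁻¹ * g * x ∈ H}
      = Nat.card {h : G // h ∈ H ∧ IsConj g h} * Nat.card {z : G // g * z = z * g} := by
  rw [Nat.card_congr (conjSetEquivConjProdCentralizer H g), Nat.card_prod]

/-- double counting: summing over `g` gives `#G ⬝ #H`. -/
theorem sum_card_conjset [Fintype G] (H : Subgroup G) :
    ∑ g : G, Nat.card {x : G // x⁻¹ * g * x ∈ H} = Nat.card G * Nat.card H := by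
  classical
  have e1 : {p : G × G // p.2⁻¹ * p.1 * p.2 ∈ H} ≃ G × H :=
    { toFun := fun p => (p.1.2, ⟨p.1.2⁻¹ * p.1.1 * p.1.2, p.2⟩)
      invFun := fun q => ⟨(q.1 * q.2.1 * q.1⁻¹, q.1), by
        show q.1⁻¹ * (q.1 * q.2.1 * q.1⁻¹) * q.1 ∈ H
        have : q.1⁻¹ * (q.1 * q.2.1 * q.1⁻¹) * q.1 = q.2.1 := by group
        rw [this]; exact q.2.2⟩
      left_inv := fun p => Subtype.ext (Prod.ext (by show p.1.2 * (p.1.2⁻¹ * p.1.1 * p.1.2) * p.1.2⁻¹ = p.1.1; group) rfl)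
      right_inv := fun q => Prod.ext rfl (Subtype.ext (by
        show q.1⁻¹ * (q.1 * q.2.1 * q.1⁻¹) * q.1 = q.2.1; group)) }
  have e2 : {p : G × G // p.2⁻¹ * p.1 * p.2 ∈ H} ≃ Σ g : G, {x : G // x⁻¹ * g * x ∈ H} :=
    Equiv.subtypeProdEquivSigmaSubtype (fun g x => x⁻¹ * g * x ∈ H)
  have h2 : Nat.card (Σ g : G, {x : G // x⁻¹ * g * x ∈ H}) = Nat.card G * Nat.card H := by
    rw [← Nat.card_congr e2, Nat.card_congr e1, Nat.card_prod]
  rw [← h2, Nat.card_eq_fintype_card, Fintype.card_sigma]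
  exact Finset.sum_congr rfl fun g _ => Nat.card_eq_fintype_card


theorem card_subgroup_eq_of_gassmann [Fintype G] {H₁ H₂ : Subgroup G}
    (h : ∀ g : G, Nat.card {x : G // x ∈ H₁ ∧ IsConj g x}
      = Nat.card {x : G // x ∈ H₂ ∧ IsConj g x}) :
    Nat.card H₁ = Nat.card H₂ := by
  have k1 := sum_card_conjset H₁
  have k2 := sum_card_conjset H₂
  have key : ∑ g : G, Nat.card {x : G // x⁻¹ * g * x ∈ H₁}
      = ∑ g : G, Nat.card {x : G // x⁻¹ * g * x ∈ H₂} := by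
    refine Finset.sum_congr rfl fun g _ => ?_
    rw [card_conjset_conj, card_conjset_conj, h g]
  rw [k1, k2] at key
  have hG : 0 < Nat.card G := Nat.card_pos
  exact Nat.eq_of_mul_eq_mul_left hG key

theorem gassmann_iff_fixeq [Fintype G] (H₁ H₂ : Subgroup G) :
    (∀ g : G, Nat.card {x : G // x ∈ H₁ ∧ IsConj g x}
      = Nat.card {x : G // x ∈ H₂ ∧ IsConj g x})
    ↔ (∀ g : G, Nat.card {q : G ⧸ H₁ // g • q = q} = Nat.card {q : G ⧸ H₂ // g • q = q}) := by
  constructor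
  · intro h g
    have hH : Nat.card H₁ = Nat.card H₂ := card_subgroup_eq_of_gassmann h
    have h1 : Nat.card {q : G ⧸ H₁ // g • q = q} * Nat.card H₁
        = Nat.card {q : G ⧸ H₂ // g • q = q} * Nat.card H₂ := by
      rw [← card_conjset_fix, ← card_conjset_fix, card_conjset_conj, card_conjset_conj, h g]
    rw [← hH] at h1
    have hpos : 0 < Nat.card H₁ := Nat.card_pos
    exact Nat.eq_of_mul_eq_mul_right hpos h1
  · intro h g
    have hQ : Nat.card (G ⧸ H₁) = Nat.card (G ⧸ H₂) := by
      have e1 : {q : G ⧸ H₁ // (1 : G) • q = q} ≃ (G ⧸ H₁) :=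
        Equiv.subtypeUnivEquiv (fun q => one_smul G q)
      have e2 : {q : G ⧸ H₂ // (1 : G) • q = q} ≃ (G ⧸ H₂) :=
        Equiv.subtypeUnivEquiv (fun q => one_smul G q)
      rw [← Nat.card_congr e1, ← Nat.card_congr e2]
      exact h 1
    have hH : Nat.card H₁ = Nat.card H₂ := by
      have l1 := Subgroup.card_eq_card_quotient_mul_card_subgroup H₁
      have l2 := Subgroup.card_eq_card_quotient_mul_card_subgroup H₂
      rw [l1, hQ] at l2
      have hpos : 0 < Nat.card (G ⧸ H₂) := Nat.card_pos
      exact Nat.eq_of_mul_eq_mul_left hpos l2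
    have h1 : Nat.card {x : G // x ∈ H₁ ∧ IsConj g x} * Nat.card {z : G // g * z = z * g}
        = Nat.card {x : G // x ∈ H₂ ∧ IsConj g x} * Nat.card {z : G // g * z = z * g} := by
      rw [← card_conjset_conj, ← card_conjset_conj, card_conjset_fix, card_conjset_fix, h g, hH]
    have hpos : 0 < Nat.card {z : G // g * z = z * g} := by
      have : Nonempty {z : G // g * z = z * g} := ⟨⟨1, by group⟩⟩
      exact Nat.card_pos
    exact Nat.eq_of_mul_eq_mul_right hpos h1


section Traces
variable {G : Type} [Group G]

theorem trace_ofMulAction {X : Type} [Fintype X] [MulAction G X] (g : G) :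
    LinearMap.trace ℚ (MonoidAlgebra ℚ X) (Representation.ofMulAction ℚ G X g)
      = (Nat.card {x : X // g • x = x} : ℚ) := by
  classical
  have hc : Representation.ofMulAction ℚ G X g
      = ((MonoidAlgebra.coeffLinearEquiv ℚ).symm.conj
          (Finsupp.lmapDomain ℚ ℚ (fun x : X => g • x))) := by
    ext x; rfl
  rw [hc, LinearMap.trace_conj']
  rw [LinearMap.trace_eq_matrix_trace ℚ (Finsupp.basisSingleOne)]
  have hdiag : ∀ x : X,
      (LinearMap.toMatrix Finsupp.basisSingleOne Finsupp.basisSingleOne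
        (Finsupp.lmapDomain ℚ ℚ (fun x : X => g • x))) x x = if g • x = x then 1 else 0 := by
    intro x
    rw [LinearMap.toMatrix_apply]
    simp only [Finsupp.coe_basisSingleOne]
    rw [Finsupp.lmapDomain_apply, Finsupp.mapDomain_single, Finsupp.basisSingleOne_repr]
    simp [Finsupp.single_apply]
  rw [Matrix.trace]
  simp only [Matrix.diag]
  rw [Finset.sum_congr rfl (fun x _ => hdiag x), Finset.sum_boole]
  rw [Nat.card_eq_fintype_card, Fintype.card_subtype]

instance asModule_tower {V : Type} [AddCommGroup V] [Module ℚ V] (ρ : Representation ℚ G V) :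
    IsScalarTower ℚ (MonoidAlgebra ℚ G) ρ.asModule :=
  ⟨fun c a x => by
    show ρ.asAlgebraHom (c • a) x = c • (ρ.asAlgebraHom a x)
    rw [map_smul]
    rfl⟩

theorem trace_reprOfSmul_asModule {V : Type} [AddCommGroup V] [Module ℚ V]
    (ρ : Representation ℚ G V) (g : G) :
    LinearMap.trace ℚ ρ.asModule (reprOfSmul (G := G) ρ.asModule g)
      = LinearMap.trace ℚ V (ρ g) := by
  have h : (reprOfSmul (G := G) ρ.asModule g) = (ρ g : V →ₗ[ℚ] V) := by
    ext x
    show ρ.asAlgebraHom (MonoidAlgebra.of ℚ G g) x = ρ g x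
    rw [Representation.asAlgebraHom_of]
  rw [h]
  rfl

end Traces

section Main
variable {G : Type} [Group G] [Finite G]

/-- An `A`-module isomorphism of `asModule`s induces an isomorphism in `Rep ℚ G`. -/
theorem rep_iso_of_asModule_equiv {V W : Type} [AddCommGroup V] [Module ℚ V]
    [AddCommGroup W] [Module ℚ W] (ρ : Representation ℚ G V) (σ : Representation ℚ G W)
    (e : ρ.asModule ≃ₗ[MonoidAlgebra ℚ G] σ.asModule) : Nonempty (Rep.of ρ ≅ Rep.of σ) := by
  let e' : V ≃ₗ[ℚ] W := e.restrictScalars ℚ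
  refine ⟨Rep.mkIso (Representation.Equiv.mk e' ?_)⟩
  intro g
  ext x
  show e' (ρ g x) = σ g (e' x)
  have h1 : ρ g x = ρ.asAlgebraHom (MonoidAlgebra.of ℚ G g) x :=
    (DFunLike.congr_fun (ρ.asAlgebraHom_of g) x).symm
  have h2 : σ g (e' x) = σ.asAlgebraHom (MonoidAlgebra.of ℚ G g) (e' x) :=
    (DFunLike.congr_fun (σ.asAlgebraHom_of g) (e' x)).symm
  rw [h1, h2]
  exact map_smul e (MonoidAlgebra.of ℚ G g) (show ρ.asModule from x)

/-- An isomorphism in `Rep ℚ G` gives equality of traces. -/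
theorem trace_eq_of_rep_iso {V W : Type} [AddCommGroup V] [Module ℚ V]
    [AddCommGroup W] [Module ℚ W] (ρ : Representation ℚ G V) (σ : Representation ℚ G W)
    (i : Rep.of ρ ≅ Rep.of σ) (g : G) :
    LinearMap.trace ℚ V (ρ g) = LinearMap.trace ℚ W (σ g) := by
  have f : V →ₗ[ℚ] W := i.hom.hom
  have f' : W →ₗ[ℚ] V := i.inv.hom
  have hfi : (i.inv.hom : W →ₗ[ℚ] V).comp (i.hom.hom : V →ₗ[ℚ] W) = LinearMap.id :=
    LinearMap.ext fun x => Rep.inv_hom_apply (e := i) (x := x)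
  have hif : (i.hom.hom : V →ₗ[ℚ] W).comp (i.inv.hom : W →ₗ[ℚ] V) = LinearMap.id :=
    LinearMap.ext fun x => Rep.hom_inv_apply (e := i) (x := x)
  let e : V ≃ₗ[ℚ] W := LinearEquiv.ofLinear i.hom.hom i.inv.hom hif hfi
  have hconj : σ g = e.conj (ρ g) := by
    ext x
    simp only [LinearEquiv.conj_apply, LinearMap.comp_apply]
    have hcomm : ∀ y, (i.hom.hom : V →ₗ[ℚ] W) (ρ g y) = σ g ((i.hom.hom : V →ₗ[ℚ] W) y) :=
      fun y => Rep.hom_comm_apply i.hom g y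
    have : e (ρ g (e.symm x)) = σ g (e (e.symm x)) := hcomm (e.symm x)
    rw [e.apply_symm_apply] at this
    exact this.symm
  rw [hconj]
  exact (LinearMap.trace_conj' (ρ g) e).symm

/-- From equal fixed point counts to an isomorphism of permutation representations. -/
theorem iso_of_fixeq (H₁ H₂ : Subgroup G)
    (h : ∀ g : G, Nat.card {q : G ⧸ H₁ // g • q = q} = Nat.card {q : G ⧸ H₂ // g • q = q}) :
    Nonempty (Rep.ofMulAction ℚ G (G ⧸ H₁) ≅ Rep.ofMulAction ℚ G (G ⧸ H₂)) := by
  classical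
  have := Fintype.ofFinite G
  have f1 : Fintype (G ⧸ H₁) := Fintype.ofFinite _
  have f2 : Fintype (G ⧸ H₂) := Fintype.ofFinite _
  set ρ₁ := Representation.ofMulAction ℚ G (G ⧸ H₁) with hρ₁
  set ρ₂ := Representation.ofMulAction ℚ G (G ⧸ H₂) with hρ₂
  haveI : FiniteDimensional ℚ ρ₁.asModule := inferInstance
  haveI : FiniteDimensional ℚ ρ₂.asModule := inferInstance
  have htr : ∀ g : G, LinearMap.trace ℚ ρ₁.asModule (reprOfSmul (G := G) ρ₁.asModule g)
      = LinearMap.trace ℚ ρ₂.asModule (reprOfSmul (G := G) ρ₂.asModule g) := by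
    intro g
    rw [trace_reprOfSmul_asModule, trace_reprOfSmul_asModule, hρ₁, hρ₂,
      trace_ofMulAction, trace_ofMulAction, h g]
  have H : ∀ (T : Type) [AddCommGroup T] [Module ℚ T] [Module (MonoidAlgebra ℚ G) T]
      [IsScalarTower ℚ (MonoidAlgebra ℚ G) T] [FiniteDimensional ℚ T],
      finrank ℚ (T →ₗ[MonoidAlgebra ℚ G] ρ₁.asModule)
        = finrank ℚ (T →ₗ[MonoidAlgebra ℚ G] ρ₂.asModule) := by
    intro T _ _ _ _ _
    exact finrank_hom_eq_of_trace_eq htr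
  obtain ⟨e⟩ := core_aux (G := G) (finrank ℚ ρ₁.asModule) ρ₁.asModule ρ₂.asModule rfl H
  exact rep_iso_of_asModule_equiv ρ₁ ρ₂ e

/-- From an isomorphism of permutation representations to equal fixed point counts. -/
theorem fixeq_of_iso (H₁ H₂ : Subgroup G)
    (i : Rep.ofMulAction ℚ G (G ⧸ H₁) ≅ Rep.ofMulAction ℚ G (G ⧸ H₂)) :
    ∀ g : G, Nat.card {q : G ⧸ H₁ // g • q = q} = Nat.card {q : G ⧸ H₂ // g • q = q} := by
  classical
  have := Fintype.ofFinite G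
  have f1 : Fintype (G ⧸ H₁) := Fintype.ofFinite _
  have f2 : Fintype (G ⧸ H₂) := Fintype.ofFinite _
  intro g
  have htr := trace_eq_of_rep_iso (Representation.ofMulAction ℚ G (G ⧸ H₁))
    (Representation.ofMulAction ℚ G (G ⧸ H₂)) i g
  rw [trace_ofMulAction, trace_ofMulAction] at htr
  exact_mod_cast htr

end Main


/-- Two subgroups `H₁`, `H₂` of a group `G` are *Gassmann equivalent* in `G` if every
conjugacy class of `G` meets `H₁` and `H₂` in the same number of elements. -/
def Subgroup.IsGassmannEquivalent {G : Type} [Group G] (H₁ H₂ : Subgroup G) : Prop :=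
  ∀ g : G, Nat.card {h : G // h ∈ H₁ ∧ IsConj g h} = Nat.card {h : G // h ∈ H₂ ∧ IsConj g h}

/-- Gassmann equivalence of `H₁` and `H₂` in a finite group `G` is equivalent to the
permutation representations `ℚ[G/H₁]` and `ℚ[G/H₂]` being isomorphic. -/
theorem gassmann_iff_permutation_reps_iso (G : Type) [Group G] [Finite G]
    (H₁ H₂ : Subgroup G) :
    H₁.IsGassmannEquivalent H₂ ↔
      Nonempty (Rep.ofMulAction ℚ G (G ⧸ H₁) ≅ Rep.ofMulAction ℚ G (G ⧸ H₂)) := by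
  have := Fintype.ofFinite G
  constructor
  · intro h
    exact iso_of_fixeq H₁ H₂ ((gassmann_iff_fixeq H₁ H₂).mp h)
  · rintro ⟨i⟩
    exact (gassmann_iff_fixeq H₁ H₂).mpr (fixeq_of_iso H₁ H₂ i)
end Counting
end Bridge
end Core
end

section
/- Let G be a finite group and let C and H be subgroups of G. Then the number of double cosets in C\G/H equals the dimension over ℚ of the subspace of C-invariant vectors of the permutation representation ℚ[G/H] (the representation of C obtained by restricting Rep.ofMulAction ℚ G (G ⧸ H) to C). -/
open Module

section Aux

variable {G : Type} [Group G] (C H : Subgroup G)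

theorem doset_mk_eq_iff (a b : G) :
    DoubleCoset.mk C H a = DoubleCoset.mk C H b ↔
      (Quotient.mk (MulAction.orbitRel C (G ⧸ H)) (a : G ⧸ H)
        = Quotient.mk (MulAction.orbitRel C (G ⧸ H)) (b : G ⧸ H)) := by
  letI := MulAction.orbitRel C (G ⧸ H)
  rw [DoubleCoset.eq, Quotient.eq]
  show _ ↔ Setoid.r _ _
  rw [MulAction.orbitRel_apply, MulAction.mem_orbit_iff]
  constructor
  · rintro ⟨h, hh, k, hk, rfl⟩
    refine ⟨⟨h, hh⟩⁻¹, ?_⟩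
    show (h⁻¹ : G) • ((h * a * k : G) : G ⧸ H) = (a : G ⧸ H)
    rw [QuotientGroup.mk_mul_of_mem _ hk]
    show (((h⁻¹ * (h * a)) : G) : G ⧸ H) = (a : G ⧸ H)
    rw [inv_mul_cancel_left]
  · rintro ⟨⟨c, hc⟩, hx⟩
    have hx' : (((c * b : G)) : G ⧸ H) = (a : G ⧸ H) := hx
    rw [QuotientGroup.eq] at hx'
    refine ⟨c⁻¹, C.inv_mem hc, ((c * b)⁻¹ * a)⁻¹, H.inv_mem hx', ?_⟩
    group

/-- Double cosets `C\G/H` are in bijection with `C`-orbits on `G/H`. -/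
noncomputable def dosetEquivOrbits :
    DoubleCoset.Quotient (C : Set G) (H : Set G) ≃
      Quotient (MulAction.orbitRel C (G ⧸ H)) where
  toFun := Quotient.lift
    (fun g => Quotient.mk (MulAction.orbitRel C (G ⧸ H)) (g : G ⧸ H))
    (fun a b h => (doset_mk_eq_iff C H a b).mp (Quotient.sound h))
  invFun q := DoubleCoset.mk C H q.out.out
  left_inv := by
    intro q
    induction q using Quotient.inductionOn with
    | h g =>
      show DoubleCoset.mk C H _ = DoubleCoset.mk C H g
      rw [doset_mk_eq_iff]
      show Quotient.mk _ ((_ : G ⧸ H)) = Quotient.mk _ ((g : G) : G ⧸ H)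
      rw [QuotientGroup.out_eq', Quotient.out_eq]
      rfl
  right_inv := by
    intro q
    show Quotient.mk (MulAction.orbitRel C (G ⧸ H)) ((q.out.out : G) : G ⧸ H) = q
    rw [QuotientGroup.out_eq', Quotient.out_eq]

end Aux

/-- For subgroups `C`, `H` of a finite group `G`, the number of double cosets in `C\G/H`
equals the dimension over `ℚ` of the subspace of `C`-invariant vectors of the permutation
representation `ℚ[G/H]`. -/
theorem card_doset_eq_finrank_invariants (G : Type) [Group G] [Finite G]
    (C H : Subgroup G) :
    Nat.card (DoubleCoset.Quotient (C : Set G) (H : Set G)) =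
      finrank ℚ (Representation.invariants
        ((Rep.ofMulAction ℚ G (G ⧸ H)).ρ.comp C.subtype)) := by
  classical
  letI : Fintype (G ⧸ H) := Fintype.ofFinite _
  letI := MulAction.orbitRel C (G ⧸ H)
  set ρ : Representation ℚ C (MonoidAlgebra ℚ (G ⧸ H)) :=
    (Rep.ofMulAction ℚ G (G ⧸ H)).ρ.comp C.subtype with hρ
  -- characterize invariants
  have hmem : ∀ v : MonoidAlgebra ℚ (G ⧸ H), v ∈ Representation.invariants ρ ↔
      ∀ (c : C) (x : G ⧸ H), v.coeff ((c : G) • x) = v.coeff x := by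
    intro v
    rw [Representation.mem_invariants]
    constructor
    · intro hv c x
      have h2 : (ρ c⁻¹ v : MonoidAlgebra ℚ (G ⧸ H)).coeff x = v.coeff ((↑(c⁻¹) : G)⁻¹ • x) :=
        Representation.coeff_ofMulAction (↑(c⁻¹) : G) v x
      have h3 : (ρ c⁻¹ v : MonoidAlgebra ℚ (G ⧸ H)).coeff x = v.coeff x :=
        congrArg (fun f : MonoidAlgebra ℚ (G ⧸ H) => f.coeff x) (hv c⁻¹)
      have h4 : ((↑(c⁻¹) : G))⁻¹ = (c : G) := by simp
      rw [h4] at h2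
      exact h2.symm.trans h3
    · intro hv c
      apply MonoidAlgebra.coeff_injective
      ext x
      have h2 : (ρ c v : MonoidAlgebra ℚ (G ⧸ H)).coeff x = v.coeff ((c : G)⁻¹ • x) :=
        Representation.coeff_ofMulAction ((c : G)) v x
      rw [h2, ← hv c ((c : G)⁻¹ • x), smul_inv_smul]
  -- linear equivalence with functions on orbits
  let E : Representation.invariants ρ ≃ₗ[ℚ] (Quotient (MulAction.orbitRel C (G ⧸ H)) → ℚ) :=
    { toFun := fun f q => (f.1 : MonoidAlgebra ℚ (G ⧸ H)).coeff q.out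
      map_add' := fun f g => by ext q; rfl
      map_smul' := fun r f => by ext q; rfl
      invFun := fun h => ⟨MonoidAlgebra.ofCoeff (Finsupp.equivFunOnFinite.symm (fun x => h (Quotient.mk _ x))), by
        rw [hmem]
        intro c x
        show h (Quotient.mk _ ((c : G) • x)) = h (Quotient.mk _ x)
        congr 1
        exact Quotient.sound ⟨c, rfl⟩⟩
      left_inv := by
        rintro ⟨f, hf⟩
        rw [hmem] at hf
        have hconst : ∀ x y : G ⧸ H,
            (Quotient.mk (MulAction.orbitRel C (G ⧸ H)) x = Quotient.mk _ y) →
            (f : MonoidAlgebra ℚ (G ⧸ H)).coeff x = f.coeff y := by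
          intro x y hxy
          obtain ⟨c, rfl⟩ := Quotient.exact hxy
          exact hf c y
        apply Subtype.ext
        apply MonoidAlgebra.coeff_injective
        apply Finsupp.ext
        intro x
        exact hconst _ x (Quotient.out_eq _)
      right_inv := by
        intro h
        funext q
        show h (Quotient.mk _ q.out) = h q
        rw [Quotient.out_eq] }
  letI : Fintype (Quotient (MulAction.orbitRel C (G ⧸ H))) := Fintype.ofFinite _
  calc Nat.card (DoubleCoset.Quotient (C : Set G) (H : Set G))
      = Nat.card (Quotient (MulAction.orbitRel C (G ⧸ H))) :=
        Nat.card_congr (dosetEquivOrbits C H)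
    _ = Fintype.card (Quotient (MulAction.orbitRel C (G ⧸ H))) := Nat.card_eq_fintype_card
    _ = finrank ℚ (Quotient (MulAction.orbitRel C (G ⧸ H)) → ℚ) :=
        (Module.finrank_fintype_fun_eq_card ℚ).symm
    _ = finrank ℚ (Representation.invariants ρ) := E.finrank_eq.symm
end

section
/- Let a, b : ℕ → ℂ be sequences such that the Dirichlet series L(a,s) = Σ_{n≥1} a(n) n^{-s} and L(b,s) = Σ_{n≥1} b(n) n^{-s} are both convergent (summable) at some real point s₀. If L(a,j) = L(b,j) for all sufficiently large natural numbers j, then a(n) = b(n) for all n ≥ 1. -/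
open LSeries Filter Topology

private lemma lseries_coeff_zero_of_eventually_zero (f : ℕ → ℂ) (s₀ : ℝ)
    (hf : LSeriesSummable f s₀) (J : ℕ) (hJ : ∀ j : ℕ, J ≤ j → LSeries f j = 0) :
    ∀ n : ℕ, 1 ≤ n → f n = 0 := by
  intro n
  induction n using Nat.strong_induction_on with
  | _ n IH =>
    intro hn
    have hn0 : (n : ℂ) ≠ 0 := Nat.cast_ne_zero.mpr (by omega)
    set j₀ : ℕ := max J ⌈s₀⌉₊ with hj₀
    have hs₀j₀ : s₀ ≤ (j₀ : ℝ) :=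
      (Nat.le_ceil s₀).trans (Nat.cast_le.mpr (le_max_right _ _))
    have hsum₀ : LSeriesSummable f (j₀ : ℂ) := by
      refine hf.of_re_le_re ?_
      simpa using hs₀j₀
    have hbound_sum : Summable fun m : ℕ ↦ (n : ℝ) ^ j₀ * ‖term f (j₀ : ℂ) m‖ :=
      (summable_norm_iff.mpr hsum₀).mul_left _
    -- the parametrized family
    have key : Tendsto (fun j : ℕ ↦ ∑' m : ℕ, (n : ℂ) ^ j * term f (j : ℂ) m)
        atTop (𝓝 (∑' m : ℕ, if m = n then f n else 0)) := by
      refine tendsto_tsum_of_dominated_convergence hbound_sum (fun m ↦ ?_) ?_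
      · rcases eq_or_ne m 0 with rfl | hm0
        · simp only [term_zero, mul_zero, if_neg (by omega : ¬(0 = n))]
          exact tendsto_const_nhds
        rcases lt_trichotomy m n with hmn | heq | hmn
        · have hfm : f m = 0 := IH m hmn (by omega)
          simp only [if_neg (by omega : ¬(m = n)), term_of_ne_zero hm0, hfm, zero_div,
            mul_zero]
          exact tendsto_const_nhds
        · subst heq
          have hkey : ∀ j : ℕ, (m : ℂ) ^ j * term f (j : ℂ) m = f m := by
            intro j
            rw [term_of_ne_zero hm0, Complex.cpow_natCast]
            have : ((m : ℂ)) ^ j ≠ 0 := pow_ne_zero _ hn0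
            field_simp
          simp only [if_pos rfl]
          exact Tendsto.congr (fun j ↦ (hkey j).symm) tendsto_const_nhds
        · have hlt : ‖(n : ℂ) / (m : ℂ)‖ < 1 := by
            rw [norm_div, Complex.norm_natCast, Complex.norm_natCast]
            rw [div_lt_one (by positivity)]
            exact_mod_cast hmn
          have hT := (tendsto_pow_atTop_nhds_zero_of_norm_lt_one hlt).const_mul (f m)
          simp only [mul_zero] at hT
          rw [if_neg (by omega : ¬(m = n))]
          refine Tendsto.congr (fun j ↦ ?_) hT
          rw [term_of_ne_zero hm0, Complex.cpow_natCast, div_pow]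
          ring
      · filter_upwards [eventually_ge_atTop j₀] with j hj m
        rcases eq_or_ne m 0 with rfl | hm0
        · simp [term_zero]
        rcases lt_or_ge m n with hmn | hmn
        · have hfm : f m = 0 := IH m hmn (by omega)
          simp only [term_of_ne_zero hm0, hfm, zero_div, mul_zero, norm_zero]
          positivity
        · have hm1 : (1 : ℝ) ≤ (m : ℝ) := by exact_mod_cast Nat.one_le_iff_ne_zero.mpr hm0
          rw [norm_mul, norm_pow, Complex.norm_natCast, norm_term_eq, norm_term_eq,
            if_neg hm0, if_neg hm0, Complex.natCast_re, Complex.natCast_re]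
          rw [div_eq_mul_inv, div_eq_mul_inv, ← mul_assoc, ← mul_assoc,
            mul_comm ((n:ℝ)^j), mul_comm ((n:ℝ)^j₀)]
          have hmpos : (0:ℝ) < m := by linarith
          rw [Real.rpow_natCast, Real.rpow_natCast]
          rw [mul_assoc, mul_assoc, ← div_eq_mul_inv, ← div_eq_mul_inv, ← div_pow, ← div_pow]
          have hr0 : (0:ℝ) ≤ (n:ℝ)/(m:ℝ) := by positivity
          have hr1 : (n:ℝ)/(m:ℝ) ≤ 1 := by
            rw [div_le_one hmpos]; exact_mod_cast hmn
          exact mul_le_mul_of_nonneg_left (pow_le_pow_of_le_one hr0 hr1 hj) (norm_nonneg _)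
    have hval : (∑' m : ℕ, if m = n then f n else 0) = f n := tsum_ite_eq n (fun _ => f n)
    rw [hval] at key
    have key' : Tendsto (fun j : ℕ ↦ ∑' m : ℕ, (n : ℂ) ^ j * term f (j : ℂ) m)
        atTop (𝓝 0) := by
      refine Tendsto.congr' ?_ tendsto_const_nhds
      filter_upwards [eventually_ge_atTop j₀] with j hj
      have hJj : J ≤ j := le_trans (le_max_left _ _) hj
      rw [tsum_mul_left]
      have : LSeries f (j : ℂ) = 0 := hJ j hJj
      rw [LSeries] at this
      rw [this, mul_zero]
    exact tendsto_nhds_unique key key'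

/-- (Uniqueness theorem for Dirichlet series, Hardy–Riesz Theorem 6.)
If two Dirichlet series are summable at some real point and agree at all sufficiently
large natural number arguments, then their coefficients agree (from `n = 1` on). -/
theorem dirichlet_series_coeff_eq_of_eventually_eq (a b : ℕ → ℂ) (s₀ : ℝ)
    (ha : LSeriesSummable a s₀) (hb : LSeriesSummable b s₀)
    (h : ∃ J : ℕ, ∀ j : ℕ, J ≤ j → LSeries a j = LSeries b j) :
    ∀ n : ℕ, 1 ≤ n → a n = b n := by
  obtain ⟨J, hJ⟩ := h
  have hf : LSeriesSummable (a - b) s₀ := ha.sub hb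
  set J' : ℕ := max J ⌈s₀⌉₊ with hJ'
  have hzero : ∀ j : ℕ, J' ≤ j → LSeries (a - b) (j : ℂ) = 0 := by
    intro j hj
    have hsj : s₀ ≤ (j : ℝ) :=
      (Nat.le_ceil s₀).trans (Nat.cast_le.mpr (le_trans (le_max_right _ _) hj))
    have hre : (s₀ : ℂ).re ≤ (j : ℂ).re := by simpa using hsj
    rw [LSeries_sub (ha.of_re_le_re hre) (hb.of_re_le_re hre),
      hJ j (le_trans (le_max_left _ _) hj), sub_self]
  intro n hn
  have := lseries_coeff_zero_of_eventually_zero (a - b) s₀ hf J' hzero n hn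
  simpa [sub_eq_zero] using this
end

section
/- Let p be a prime number and n a natural number. Let C, C' : ℕ → ℕ be functions with C(0) = C'(0) = 0, C(f) = C'(f) = 0 for f > n, and C(f) < p and C'(f) < p for all f. If the formal power series identity ∏_{f=1}^{n} (1 - X^f)^{C(f)} = ∏_{f=1}^{n} (1 - X^f)^{C'(f)} holds in the power series ring (ZMod p)⟦X⟧, then C = C'. -/
open PowerSeries


private lemma aux_tail_pow {R : Type*} [CommRing R] (f c : ℕ) :
    ∃ t : R⟦X⟧, (1 - (X : R⟦X⟧) ^ f) ^ c = 1 + X ^ f * t := by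
  induction c with
  | zero => exact ⟨0, by ring⟩
  | succ c ih =>
    obtain ⟨t, ht⟩ := ih
    exact ⟨t - X ^ f * t - 1, by rw [pow_succ, ht]; ring⟩

private lemma aux_tail_prod {R : Type*} [CommRing R] (m : ℕ) (s : Finset ℕ) (D : ℕ → ℕ)
    (hs : ∀ f ∈ s, m + 1 ≤ f) :
    ∃ g : R⟦X⟧, ∏ f ∈ s, (1 - (X : R⟦X⟧) ^ f) ^ D f = 1 + X ^ (m + 1) * g := by
  classical
  induction s using Finset.induction with
  | empty => exact ⟨0, by simp⟩
  | @insert a s ha ih =>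
    obtain ⟨g, hg⟩ := ih (fun f hf => hs f (Finset.mem_insert_of_mem hf))
    obtain ⟨t, ht⟩ := aux_tail_pow (R := R) a (D a)
    have haX : (X : R⟦X⟧) ^ a = X ^ (m + 1) * X ^ (a - (m + 1)) := by
      rw [← pow_add]
      congr 1
      have := hs a (Finset.mem_insert_self a s)
      omega
    refine ⟨X ^ (a - (m+1)) * t + g + X ^ (m+1) * (X ^ (a - (m+1)) * t * g), ?_⟩
    rw [Finset.prod_insert ha, hg, ht, haX]
    ring

private lemma aux_head_pow {R : Type*} [CommRing R] (m : ℕ) (hm : 1 ≤ m) (c : ℕ) :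
    ∃ h : R⟦X⟧, (1 - (X : R⟦X⟧) ^ m) ^ c
      = 1 - PowerSeries.C (c : R) * X ^ m + X ^ (m + 1) * h := by
  induction c with
  | zero => exact ⟨0, by simp⟩
  | succ c ih =>
    obtain ⟨h, hh⟩ := ih
    have key : (X : R⟦X⟧) ^ m * X ^ m = X ^ (m + 1) * X ^ (m - 1) := by
      rw [← pow_add, ← pow_add]; congr 1; omega
    refine ⟨PowerSeries.C (c : R) * X ^ (m - 1) + h - h * X ^ m, ?_⟩
    rw [pow_succ, hh]
    simp only [Nat.cast_add, Nat.cast_one, map_add, map_one]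
    linear_combination (PowerSeries.C (c : R)) * key

private lemma aux_coeff_prod {R : Type*} [CommRing R] (m n : ℕ) (hm : 1 ≤ m) (hn : m ≤ n)
    (D : ℕ → ℕ) :
    (coeff m) (∏ f ∈ Finset.Icc m n, (1 - (X : R⟦X⟧) ^ f) ^ D f) = -(D m : R) := by
  have hins : Finset.Icc m n = insert m (Finset.Icc (m + 1) n) := by
    ext x; simp only [Finset.mem_Icc, Finset.mem_insert]; omega
  rw [hins, Finset.prod_insert (by simp)]
  obtain ⟨h, hh⟩ := aux_head_pow (R := R) m hm (D m)
  obtain ⟨g, hg⟩ := aux_tail_prod (R := R) m (Finset.Icc (m + 1) n) D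
    (fun f hf => (Finset.mem_Icc.mp hf).1)
  rw [hh, hg]
  have expand : (1 - PowerSeries.C (D m : R) * X ^ m + X ^ (m + 1) * h) * (1 + X ^ (m + 1) * g)
      = 1 - PowerSeries.C (D m : R) * X ^ m
        + X ^ (m + 1) * (h + g - PowerSeries.C (D m : R) * X ^ m * g + X ^ (m + 1) * (h * g)) := by
    ring
  rw [expand]
  have hzero : (coeff m) ((X : R⟦X⟧) ^ (m + 1) *
      (h + g - PowerSeries.C (D m : R) * X ^ m * g + X ^ (m + 1) * (h * g))) = 0 := by
    refine (X_pow_dvd_iff.mp ⟨_, rfl⟩) m (by omega)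
  rw [map_add, map_sub, hzero, add_zero, coeff_C_mul, coeff_X_pow, if_pos rfl,
    coeff_one, if_neg (by omega)]
  ring

/-- (Combinatorial core of Theorem 4.3.) Let `p` be prime and let `C, C' : ℕ → ℕ` vanish at
`0` and above `n`, and take values `< p`. If `∏_{f=1}^{n} (1 - X^f)^{C f}` and
`∏_{f=1}^{n} (1 - X^f)^{C' f}` agree as formal power series over `ZMod p`, then `C = C'`. -/
theorem eq_of_prod_one_sub_pow_eq (p : ℕ) (hp : p.Prime) (n : ℕ) (C C' : ℕ → ℕ)
    (hC0 : C 0 = 0) (hC'0 : C' 0 = 0)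
    (hCn : ∀ f, n < f → C f = 0) (hC'n : ∀ f, n < f → C' f = 0)
    (hCp : ∀ f, C f < p) (hC'p : ∀ f, C' f < p)
    (h : ∏ f ∈ Finset.Icc 1 n, (1 - (X : (ZMod p)⟦X⟧) ^ f) ^ C f =
         ∏ f ∈ Finset.Icc 1 n, (1 - (X : (ZMod p)⟦X⟧) ^ f) ^ C' f) :
    C = C' := by
  haveI := Fact.mk hp
  funext m
  induction m using Nat.strong_induction_on with
  | _ m ih =>
  rcases Nat.eq_zero_or_pos m with rfl | hm1
  · rw [hC0, hC'0]
  rcases le_or_gt m n with hmn | hnm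
  swap
  · rw [hCn m hnm, hC'n m hnm]
  -- split the product at m
  have hsplit : Finset.Icc 1 n = Finset.Icc 1 (m - 1) ∪ Finset.Icc m n := by
    ext x; simp only [Finset.mem_Icc, Finset.mem_union]; omega
  have hdisj : Disjoint (Finset.Icc 1 (m - 1)) (Finset.Icc m n) := by
    rw [Finset.disjoint_left]
    intro a ha hb
    simp only [Finset.mem_Icc] at ha hb
    omega
  rw [hsplit, Finset.prod_union hdisj, Finset.prod_union hdisj] at h
  have hhead : ∏ f ∈ Finset.Icc 1 (m - 1), (1 - (X : (ZMod p)⟦X⟧) ^ f) ^ C f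
      = ∏ f ∈ Finset.Icc 1 (m - 1), (1 - (X : (ZMod p)⟦X⟧) ^ f) ^ C' f := by
    refine Finset.prod_congr rfl fun f hf => ?_
    rw [ih f (by simp only [Finset.mem_Icc] at hf; omega)]
  rw [hhead] at h
  have hne : ∏ f ∈ Finset.Icc 1 (m - 1), (1 - (X : (ZMod p)⟦X⟧) ^ f) ^ C' f ≠ 0 := by
    intro h0
    have := congrArg (constantCoeff (R := ZMod p)) h0
    rw [map_prod, map_zero] at this
    refine one_ne_zero (α := ZMod p) ?_
    rw [← this]
    refine (Finset.prod_eq_one fun f hf => ?_).symm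
    have hf1 : 1 ≤ f := (Finset.mem_Icc.mp hf).1
    rw [map_pow, map_sub, map_one, map_pow, constantCoeff_X,
      zero_pow (by omega), sub_zero, one_pow]
  have h2 := mul_left_cancel₀ hne h
  have h3 := congrArg (coeff m) h2
  rw [aux_coeff_prod m n hm1 hmn C, aux_coeff_prod m n hm1 hmn C'] at h3
  have h4 : ((C m : ZMod p)) = (C' m : ZMod p) := by
    exact neg_injective h3
  have := congrArg ZMod.val h4
  rwa [ZMod.val_natCast_of_lt (hCp m), ZMod.val_natCast_of_lt (hC'p m)] at this
end
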